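/- arXiv:math/0212333 — 2 statements merged into one kernel-verified Lean document; each statement's English description precedes it below -/
import Mathlib

section
/- Let G be a group such that for all a, b in G, the subgroup ⟨a, aᵇ⟩ is nilpotent. Then G is an Engel group: for all x, y in G there exists n such that [y, x, x, ..., x] (with x repeated n times) equals 1. -/
open scoped commutatorElement

/-- Left-normed iterated commutator: `engel y x n = [y, x, x, ..., x]` (n copies of x). -/
def engel {G : Type*} [Group G] (y x : G) : ℕ → G
  | 0 => y
  | n + 1 => ⁅engel y x n, x⁆

lemma engel_map {G H : Type*} [Group G] [Group H] (f : G →* H) (y x : G) (n : ℕ) :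
    f (engel y x n) = engel (f y) (f x) n := by
  induction n with
  | zero => rfl
  | succ n ih => simp [engel, map_commutatorElement, ih]

lemma engel_succ_eq (G : Type*) [Group G] (y x : G) (n : ℕ) :
    engel y x (n + 1) = engel ⁅y, x⁆ x n := by
  induction n with
  | zero => rfl
  | succ n ih => rw [engel, ih]; rfl

lemma engel_mem_lcs {G : Type*} [Group G] (y x : G) (n : ℕ) :
    engel y x n ∈ Subgroup.lowerCentralSeries (⊤ : Subgroup G) n := by
  induction n with
  | zero => trivial
  | succ n ih =>
      rw [Subgroup.lowerCentralSeries_succ]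
      exact Subgroup.commutator_mem_commutator ih (Subgroup.mem_top x)

theorem stmt_3 {G : Type*} [Group G]
    (h : ∀ a b : G, Group.IsNilpotent ↥(Subgroup.closure {a, b⁻¹ * a * b})) :
    ∀ x y : G, ∃ n : ℕ, 1 ≤ n ∧ engel y x n = 1 := by
  intro x y
  set H : Subgroup G := Subgroup.closure {x, y * x * y⁻¹} with hH
  have hSH : Subgroup.closure {x, y⁻¹⁻¹ * x * y⁻¹} = H := by rw [inv_inv]
  have hnil : Group.IsNilpotent ↥H := hSH ▸ h x y⁻¹
  have hx : x ∈ H := Subgroup.subset_closure (Set.mem_insert _ _)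
  have hyxy : y * x * y⁻¹ ∈ H :=
    Subgroup.subset_closure (Set.mem_insert_of_mem _ rfl)
  have hg : ⁅y, x⁆ ∈ H := by
    have : ⁅y, x⁆ = (y * x * y⁻¹) * x⁻¹ := by
      simp [commutatorElement_def, mul_assoc]
    rw [this]
    exact mul_mem hyxy (inv_mem hx)
  obtain ⟨m, hm⟩ := nilpotent_iff_lowerCentralSeries.mp hnil
  refine ⟨m + 1, Nat.le_add_left 1 m, ?_⟩
  rw [engel_succ_eq]
  have key : engel (⟨⁅y, x⁆, hg⟩ : H) ⟨x, hx⟩ m = 1 := by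
    have := engel_mem_lcs (⟨⁅y, x⁆, hg⟩ : H) ⟨x, hx⟩ m
    rw [hm] at this
    simpa using this
  have := congrArg (H.subtype) key
  rwa [engel_map, map_one] at this
end

section
/- Let λ be a positive integer and let G be a group that is residually (finite of odd order), such that for all x, y in G the subgroup ⟨x², y⟩ is nilpotent of class at most λ. Then every 2-generated subgroup of G is nilpotent of class at most λ. -/
lemma lcs_le_map_of_surjective {G H : Type*} [Group G] [Group H] (f : G →* H)
    (hf : Function.Surjective f) (n : ℕ) :
    (⊤ : Subgroup H).lowerCentralSeries n ≤ Subgroup.map f ((⊤ : Subgroup G).lowerCentralSeries n) := by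
  induction n with
  | zero =>
    simp [Subgroup.lowerCentralSeries_zero, Subgroup.map_top_of_surjective f hf]
  | succ n ih =>
    rw [Subgroup.lowerCentralSeries_succ, Subgroup.commutator_def, Subgroup.closure_le]
    rintro _ ⟨p, hp, q, -, rfl⟩
    obtain ⟨p', hp', rfl⟩ := ih hp
    obtain ⟨q', rfl⟩ := hf q
    refine ⟨p' * q' * p'⁻¹ * q'⁻¹, ?_, by simp [commutatorElement_def]⟩
    rw [Subgroup.lowerCentralSeries_succ, Subgroup.commutator_def]
    exact Subgroup.subset_closure ⟨p', hp', q', Subgroup.mem_top _, rfl⟩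

theorem stmt_10 {G : Type*} [Group G] (lam : ℕ) (hlam : 1 ≤ lam)
    (hres : ∀ g : G, g ≠ 1 → ∃ N : Subgroup G, N.Normal ∧ g ∉ N ∧
      Finite (G ⧸ N) ∧ Odd (Nat.card (G ⧸ N)))
    (h : ∀ x y : G, (⊤ : Subgroup ↥(Subgroup.closure {x ^ 2, y})).lowerCentralSeries lam = ⊥) :
    ∀ x y : G, (⊤ : Subgroup ↥(Subgroup.closure {x, y})).lowerCentralSeries lam = ⊥ := by
  intro x y
  rw [eq_bot_iff]
  intro g hg
  rw [Subgroup.mem_bot]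
  by_contra hne
  have hne' : (g : G) ≠ 1 := fun h' => hne (Subtype.ext h')
  obtain ⟨N, hN, hgN, hfin, hodd⟩ := hres (g : G) hne'
  haveI := hN
  set π : G →* G ⧸ N := QuotientGroup.mk' N with hπ
  set n : ℕ := Nat.card (G ⧸ N) with hn
  have hdvd : 2 ∣ n + 1 := by
    obtain ⟨m, hm⟩ := hodd
    exact ⟨m + 1, by omega⟩
  set a : G := x ^ ((n + 1) / 2) with ha
  have ha2 : a ^ 2 = x ^ (n + 1) := by
    rw [ha, ← pow_mul, Nat.div_mul_cancel hdvd]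
  have hπa : π (a ^ 2) = π x := by
    rw [ha2, map_pow, pow_succ, pow_card_eq_one', one_mul]
  -- the two images coincide
  have hHeq : Subgroup.map π (Subgroup.closure {x, y})
      = Subgroup.map π (Subgroup.closure {a ^ 2, y}) := by
    rw [MonoidHom.map_closure, MonoidHom.map_closure, Set.image_pair, Set.image_pair, hπa]
  -- lower central series of the image is trivial
  have hbot : (⊤ : Subgroup ↥(Subgroup.map π (Subgroup.closure {x, y}))).lowerCentralSeries lam = ⊥ := by
    rw [hHeq, eq_bot_iff]
    have hle := lcs_le_map_of_surjective (π.subgroupMap (Subgroup.closure {a ^ 2, y}))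
      (π.subgroupMap_surjective _) lam
    rw [h a y] at hle
    simpa using hle
  -- g maps to 1 in the quotient
  have hg1 : (π.subgroupMap (Subgroup.closure {x, y})) g = 1 := by
    have hmem := Subgroup.lowerCentralSeries.map (π.subgroupMap (Subgroup.closure {x, y})) lam
      ⟨g, hg, rfl⟩
    rw [hbot] at hmem
    exact Subgroup.mem_bot.mp hmem
  exact hgN ((QuotientGroup.eq_one_iff _).mp (congrArg Subtype.val hg1))
end
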